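/- arXiv:1409.6782 — 2 statements merged into one kernel-verified Lean document; each statement's English description precedes it below -/
import Mathlib

section
/- Let g be a finite-dimensional restricted Lie algebra over a field k of characteristic p, and define rk_el(g) as the maximal dimension of an elementary subalgebra of g (an abelian subalgebra with trivial p-power map). For g = gl_2(k) with p > 2, the subalgebra of strictly upper triangular matrices is an elementary subalgebra of dimension 1, and the maximal dimension of an elementary subalgebra of gl_2 is 1; i.e., rk_el(gl_2) = 1. -/
open Matrix

section Aux

variable {k : Type*} [Field k]

-- Cayley–Hamilton for 2×2
lemma stmt12_sq_eq (M : Matrix (Fin 2) (Fin 2) k) :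
    M ^ 2 = M.trace • M - M.det • (1 : Matrix (Fin 2) (Fin 2) k) := by
  ext i j
  fin_cases i <;> fin_cases j <;>
    simp [pow_two, Matrix.mul_apply, Fin.sum_univ_two, Matrix.trace_fin_two,
      Matrix.det_fin_two, Matrix.one_apply] <;> ring

lemma stmt12_sq_zero (p : ℕ) [Fact p.Prime] (M : Matrix (Fin 2) (Fin 2) k)
    (h : M ^ p = 0) : M ^ 2 = 0 := by
  have hp1 : p ≠ 0 := (Fact.out : p.Prime).ne_zero
  have hdet : M.det = 0 := by
    have : M.det ^ p = 0 := by
      rw [← Matrix.det_pow, h]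
      simp
    exact pow_eq_zero_iff hp1 |>.mp this
  have hsq : M ^ 2 = M.trace • M := by
    rw [stmt12_sq_eq, hdet, zero_smul, sub_zero]
  by_cases hM : M = 0
  · simp [hM]
  have key : ∀ n, M ^ (n + 1) = M.trace ^ n • M := by
    intro n
    induction n with
    | zero => simp
    | succ n ih =>
      rw [pow_succ, ih, Matrix.smul_mul, ← pow_two, hsq, smul_smul, pow_succ]
  obtain ⟨q, rfl⟩ : ∃ q, p = q + 1 :=
    ⟨p - 1, (Nat.succ_pred_eq_of_pos (Nat.pos_of_ne_zero hp1)).symm⟩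
  rw [key q] at h
  rcases smul_eq_zero.mp h with h' | h'
  · have ht : M.trace = 0 := by
      by_cases hq : q = 0
      · subst hq; exact absurd h' (by simp)
      · exact pow_eq_zero_iff hq |>.mp h'
    rw [hsq, ht, zero_smul]
  · exact absurd h' hM

lemma stmt12_fld {a b c e f g : k} (h1 : a * a + b * c = 0)
    (hAB1 : a * e + b * g = 0) (hAB2 : a * f - b * e = 0)
    (hAB3 : c * e - a * g = 0) (hAB4 : c * f + a * e = 0)
    (hne : ¬(a = 0 ∧ b = 0 ∧ c = 0)) :
    ∃ t : k, e = t * a ∧ f = t * b ∧ g = t * c := by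
  by_cases ha : a = 0
  · subst ha
    have hbc : b * c = 0 := by linear_combination h1
    by_cases hb : b = 0
    · subst hb
      have hc : c ≠ 0 := by
        intro hc; exact hne ⟨rfl, rfl, hc⟩
      have he : e = 0 := by
        have h' : c * e = 0 := by linear_combination hAB3
        rcases mul_eq_zero.mp h' with h | h
        · exact absurd h hc
        · exact h
      have hf : f = 0 := by
        have h' : c * f = 0 := by linear_combination hAB4
        rcases mul_eq_zero.mp h' with h | h
        · exact absurd h hc
        · exact h
      exact ⟨g / c, by simp [he], by simp [hf], by field_simp⟩
    · have hc : c = 0 := by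
        rcases mul_eq_zero.mp hbc with h | h
        · exact absurd h hb
        · exact h
      subst hc
      have he : e = 0 := by
        have : b * e = 0 := by linear_combination -hAB2
        rcases mul_eq_zero.mp this with h | h
        · exact absurd h hb
        · exact h
      have hg : g = 0 := by
        have : b * g = 0 := by linear_combination hAB1
        rcases mul_eq_zero.mp this with h | h
        · exact absurd h hb
        · exact h
      exact ⟨f / b, by simp [he], by field_simp, by simp [hg]⟩
  · refine ⟨e / a, by field_simp, ?_, ?_⟩
    · field_simp
      linear_combination hAB2
    · field_simp
      linear_combination -hAB3

lemma stmt12_prop (p : ℕ) [Fact p.Prime] [CharP k p] (hp : 2 < p)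
    (A B : Matrix (Fin 2) (Fin 2) k)
    (hA : A ^ 2 = 0) (hB : B ^ 2 = 0) (hS : (A + B) ^ 2 = 0)
    (hc : A * B = B * A) (hA0 : A ≠ 0) : ∃ t : k, B = t • A := by
  have h2 : (2 : k) ≠ 0 := by
    rw [show ((2 : k)) = ((2 : ℕ) : k) by norm_num, Ne, CharP.cast_eq_zero_iff k p]
    intro hdvd
    have := Nat.le_of_dvd (by norm_num) hdvd
    omega
  have hBA : B * A = 0 := by
    have e1 : A * B + B * A = (A + B) ^ 2 - A ^ 2 - B ^ 2 := by noncomm_ring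
    rw [hS, hA, hB] at e1
    simp only [sub_zero, zero_sub, neg_zero] at e1
    rw [hc] at e1
    have e2 : (2 : k) • (B * A) = 0 := by
      rw [two_smul]; exact e1
    rcases smul_eq_zero.mp e2 with h | h
    · exact absurd h h2
    · exact h
  have hAB : A * B = 0 := by rw [hc]; exact hBA
  have hAm : A * A = 0 := by rw [← pow_two]; exact hA
  have hBm : B * B = 0 := by rw [← pow_two]; exact hB
  have entry : ∀ (M N : Matrix (Fin 2) (Fin 2) k), M * N = 0 → ∀ i j,
      M i 0 * N 0 j + M i 1 * N 1 j = 0 := by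
    intro M N h i j
    have := congrFun (congrFun h i) j
    simpa [Matrix.mul_apply, Fin.sum_univ_two] using this
  have a00 := entry A A hAm 0 0
  have a01 := entry A A hAm 0 1
  have a10 := entry A A hAm 1 0
  have a11 := entry A A hAm 1 1
  have b00 := entry B B hBm 0 0
  have b01 := entry B B hBm 0 1
  have b10 := entry B B hBm 1 0
  have b11 := entry B B hBm 1 1
  have ab00 := entry A B hAB 0 0
  have ab01 := entry A B hAB 0 1
  have ab10 := entry A B hAB 1 0
  have ab11 := entry A B hAB 1 1
  -- trace zero
  have tr : ∀ (M : Matrix (Fin 2) (Fin 2) k),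
      (∀ i j, M i 0 * M 0 j + M i 1 * M 1 j = 0) → M 1 1 = - M 0 0 := by
    intro M h
    by_cases hb : M 0 1 = 0
    · by_cases hc' : M 1 0 = 0
      · have h0 : M 0 0 = 0 := by
          have := h 0 0; rw [hb] at this
          simpa [hc'] using mul_self_eq_zero.mp (by linear_combination this)
        have h1 : M 1 1 = 0 := by
          have := h 1 1; rw [hc'] at this
          simpa using mul_self_eq_zero.mp (by linear_combination this)
        rw [h0, h1, neg_zero]
      · have : (M 0 0 + M 1 1) * M 1 0 = 0 := by linear_combination h 1 0
        rcases mul_eq_zero.mp this with h' | h'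
        · linear_combination h'
        · exact absurd h' hc'
    · have : (M 0 0 + M 1 1) * M 0 1 = 0 := by linear_combination h 0 1
      rcases mul_eq_zero.mp this with h' | h'
      · linear_combination h'
      · exact absurd h' hb
  have hd : A 1 1 = - A 0 0 := tr A (entry A A hAm)
  have hh : B 1 1 = - B 0 0 := tr B (entry B B hBm)
  have hne : ¬(A 0 0 = 0 ∧ A 0 1 = 0 ∧ A 1 0 = 0) := by
    rintro ⟨h1, h2', h3⟩
    apply hA0
    ext i j
    fin_cases i <;> fin_cases j <;>
      simp [h1, h2', h3, hd]
  rw [hh] at ab01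
  rw [hd] at ab10
  rw [hd, hh] at ab11
  obtain ⟨t, he, hf, hg⟩ := stmt12_fld (a := A 0 0) (b := A 0 1) (c := A 1 0)
    (e := B 0 0) (f := B 0 1) (g := B 1 0)
    (by linear_combination a00)
    (by linear_combination ab00)
    (by linear_combination ab01)
    (by linear_combination ab10)
    (by linear_combination ab11)
    hne
  refine ⟨t, ?_⟩
  ext i j
  fin_cases i <;> fin_cases j <;> simp only [Matrix.smul_apply, smul_eq_mul, Fin.isValue]
  · exact he
  · exact hf
  · exact hg
  · show B 1 1 = t * A 1 1
    rw [hh, hd]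
    linear_combination -he
end Aux

/-- For `g = gl₂(k)` with `char k = p > 2`, the line spanned by
the strictly upper triangular matrix `E₀₁` is an elementary subalgebra of
dimension `1` (abelian with vanishing `p`-th matrix power), and every subspace
of `gl₂` consisting of pairwise commuting matrices with vanishing `p`-th power
has dimension at most `1`; i.e. `rk_el(gl₂) = 1`. -/
theorem stmt12 (k : Type*) [Field k] (p : ℕ) [Fact p.Prime] [CharP k p]
    (hp : 2 < p) :
    (∀ A ∈ Submodule.span k ({Matrix.single 0 1 (1 : k)} :
        Set (Matrix (Fin 2) (Fin 2) k)),
      ∀ B ∈ Submodule.span k ({Matrix.single 0 1 (1 : k)} :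
        Set (Matrix (Fin 2) (Fin 2) k)),
        A * B - B * A = 0) ∧
    (∀ A ∈ Submodule.span k ({Matrix.single 0 1 (1 : k)} :
        Set (Matrix (Fin 2) (Fin 2) k)), A ^ p = 0) ∧
    Module.finrank k
      (Submodule.span k ({Matrix.single 0 1 (1 : k)} :
        Set (Matrix (Fin 2) (Fin 2) k))) = 1 ∧
    (∀ S : Submodule k (Matrix (Fin 2) (Fin 2) k),
      (∀ A ∈ S, ∀ B ∈ S, A * B - B * A = 0) → (∀ A ∈ S, A ^ p = 0) →
        Module.finrank k S ≤ 1) := by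
  set E : Matrix (Fin 2) (Fin 2) k := Matrix.single 0 1 (1 : k) with hE
  have hEE : E * E = 0 := by
    rw [hE]
    ext i j
    simp [Matrix.mul_apply, Matrix.single, Fin.sum_univ_two]
  have hE0 : E ≠ 0 := by
    intro h
    have := congrFun (congrFun h 0) 1
    simp [hE, Matrix.single] at this
  refine ⟨?_, ?_, ?_, ?_⟩
  · intro A hA B hB
    obtain ⟨s, rfl⟩ := Submodule.mem_span_singleton.mp hA
    obtain ⟨t, rfl⟩ := Submodule.mem_span_singleton.mp hB
    rw [Matrix.smul_mul, Matrix.smul_mul, Matrix.mul_smul, Matrix.mul_smul,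
      smul_smul, smul_smul, mul_comm t s, sub_self]
  · intro A hA
    obtain ⟨s, rfl⟩ := Submodule.mem_span_singleton.mp hA
    have hEp : E ^ p = 0 := by
      obtain ⟨q, rfl⟩ : ∃ q, p = q + 2 := ⟨p - 2, by omega⟩
      rw [pow_add, pow_two, hEE, mul_zero]
    rw [smul_pow, hEp, smul_zero]
  · exact finrank_span_singleton hE0
  · intro S hcomm hpow
    by_cases hbot : ∀ A ∈ S, A = 0
    · have : S = ⊥ := (Submodule.eq_bot_iff S).mpr hbot
      rw [this]
      simp
    · push_neg at hbot
      obtain ⟨A, hAS, hA0⟩ := hbot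
      have hA2 := stmt12_sq_zero p A (hpow A hAS)
      have hle : S ≤ Submodule.span k {A} := by
        intro B hBS
        have hB2 := stmt12_sq_zero p B (hpow B hBS)
        have hS2 := stmt12_sq_zero p (A + B) (hpow _ (S.add_mem hAS hBS))
        have hc : A * B = B * A := sub_eq_zero.mp (hcomm A hAS B hBS)
        obtain ⟨t, rfl⟩ := stmt12_prop p hp A B hA2 hB2 hS2 hc hA0
        exact Submodule.mem_span_singleton.mpr ⟨t, rfl⟩
      calc Module.finrank k S ≤ Module.finrank k (Submodule.span k {A}) :=
            Submodule.finrank_mono hle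
        _ = 1 := finrank_span_singleton hA0
end

section
/- Let k be a field of characteristic p > 0, A = k[x]/(x^p), and let M, N be finite-dimensional A-modules that are both free. Then M ⊗_k N, with x acting by the coproduct x ↦ x⊗1 + 1⊗x (i.e., x·(m⊗n) = xm⊗n + m⊗xn), is a free A-module. -/
open Polynomial TensorProduct

set_option synthInstance.maxHeartbeats 1000000
set_option maxHeartbeats 4000000

section Generic

variable (k : Type*) [Field k]
variable (A' : Type*) [CommRing A'] [Algebra k A']

/-- The coproduct operator `x ⊗ 1 + 1 ⊗ x` on `M ⊗[k] N`. -/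
noncomputable def opT (x : A') (M N : Type*) [AddCommGroup M] [Module A' M]
    [Module k M] [IsScalarTower k A' M] [AddCommGroup N] [Module A' N]
    [Module k N] [IsScalarTower k A' N] : M ⊗[k] N →ₗ[k] M ⊗[k] N :=
  TensorProduct.map (LinearMap.restrictScalars k (LinearMap.lsmul A' M x))
      (LinearMap.id : N →ₗ[k] N)
    + TensorProduct.map (LinearMap.id : M →ₗ[k] M)
      (LinearMap.restrictScalars k (LinearMap.lsmul A' N x))

variable {k A'}
variable {p : ℕ} [Fact p.Prime] [CharP k p] [Nontrivial A']

theorem gen_stmt (x : A') (hx : x ^ p = 0)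
    (hlift : ∀ t : A' ⊗[k] A', t ^ p = 0 → ∃ f : A' →ₐ[k] (A' ⊗[k] A'), f x = t)
    (hext : ∀ f g : A' →ₐ[k] (A' ⊗[k] A'), f x = g x → f = g)
    {ι : Type*} [Fintype ι] (bA : Module.Basis ι k A')
    (M : Type*) [AddCommGroup M] [Module A' M]
    [Module k M] [IsScalarTower k A' M] [FiniteDimensional k M]
    (N : Type*) [AddCommGroup N] [Module A' N]
    [Module k N] [IsScalarTower k A' N] [FiniteDimensional k N]
    (hM : Module.Free A' M) (hN : Module.Free A' N) :
    ∃ (n : ℕ) (e : M ⊗[k] N ≃ₗ[k] (Fin n → A')),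
      ∀ z : M ⊗[k] N, e (opT k A' x M N z) = x • e z := by
  haveI : CharP A' p := charP_of_injective_algebraMap (algebraMap k A').injective p
  haveI : Nonempty ι := bA.index_nonempty
  haveI : DecidableEq ι := Classical.decEq ι
  let bB : Module.Basis ι A' (A' ⊗[k] A') := Algebra.TensorProduct.basis A' bA
  haveI : Nontrivial (A' ⊗[k] A') := bB.repr.toEquiv.nontrivial
  haveI : CharP (A' ⊗[k] A') p :=
    charP_of_injective_algebraMap (algebraMap k (A' ⊗[k] A')).injective p
  -- the two special elements
  set Tel : A' ⊗[k] A' := x ⊗ₜ 1 + 1 ⊗ₜ x with hTelDef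
  set Sel : A' ⊗[k] A' := x ⊗ₜ 1 - 1 ⊗ₜ x with hSelDef
  have hTel : Tel ^ p = 0 := by
    rw [hTelDef, add_pow_char, Algebra.TensorProduct.tmul_pow, Algebra.TensorProduct.tmul_pow,
      hx, one_pow, zero_tmul, tmul_zero, add_zero]
  have hSel : Sel ^ p = 0 := by
    rw [hSelDef, sub_pow_char, Algebra.TensorProduct.tmul_pow, Algebra.TensorProduct.tmul_pow,
      hx, one_pow, zero_tmul, tmul_zero, sub_zero]
  obtain ⟨f, hf⟩ := hlift Tel hTel
  obtain ⟨g, hg⟩ := hlift Sel hSel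
  -- the untwisting automorphism
  let σh : (A' ⊗[k] A') →ₐ[k] (A' ⊗[k] A') :=
    Algebra.TensorProduct.productMap f Algebra.TensorProduct.includeRight
  let σh' : (A' ⊗[k] A') →ₐ[k] (A' ⊗[k] A') :=
    Algebra.TensorProduct.productMap g Algebra.TensorProduct.includeRight
  have hσl : σh (x ⊗ₜ 1) = Tel := by
    rw [show σh (x ⊗ₜ 1) = f x * Algebra.TensorProduct.includeRight (1 : A') from
      Algebra.TensorProduct.productMap_apply_tmul _ _ _ _, map_one, mul_one, hf]
  have hσr : ∀ a : A', σh (1 ⊗ₜ a) = 1 ⊗ₜ a := by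
    intro a
    rw [show σh (1 ⊗ₜ a) = f 1 * Algebra.TensorProduct.includeRight a from
      Algebra.TensorProduct.productMap_apply_tmul _ _ _ _, map_one, one_mul]
    rfl
  have hσl' : σh' (x ⊗ₜ 1) = Sel := by
    rw [show σh' (x ⊗ₜ 1) = g x * Algebra.TensorProduct.includeRight (1 : A') from
      Algebra.TensorProduct.productMap_apply_tmul _ _ _ _, map_one, mul_one, hg]
  have hσr' : ∀ a : A', σh' (1 ⊗ₜ a) = 1 ⊗ₜ a := by
    intro a
    rw [show σh' (1 ⊗ₜ a) = g 1 * Algebra.TensorProduct.includeRight a from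
      Algebra.TensorProduct.productMap_apply_tmul _ _ _ _, map_one, one_mul]
    rfl
  have hc1 : σh.comp σh' = AlgHom.id k (A' ⊗[k] A') := by
    refine Algebra.TensorProduct.ext (hext _ _ ?_) ?_
    · show σh (σh' (x ⊗ₜ 1)) = (x : A') ⊗ₜ (1 : A')
      rw [hσl', hSelDef, map_sub, hσl, hσr, hTelDef]
      abel
    · refine hext _ _ ?_
      show σh (σh' (1 ⊗ₜ x)) = (1 : A') ⊗ₜ x
      rw [hσr', hσr]
  have hc2 : σh'.comp σh = AlgHom.id k (A' ⊗[k] A') := by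
    refine Algebra.TensorProduct.ext (hext _ _ ?_) ?_
    · show σh' (σh (x ⊗ₜ 1)) = (x : A') ⊗ₜ (1 : A')
      rw [hσl, hTelDef, map_add, hσl', hσr', hSelDef]
      abel
    · refine hext _ _ ?_
      show σh' (σh (1 ⊗ₜ x)) = (1 : A') ⊗ₜ x
      rw [hσr, hσr']
  let σ : (A' ⊗[k] A') ≃ₐ[k] (A' ⊗[k] A') := AlgEquiv.ofAlgHom σh σh' hc1 hc2
  have hσsymm : σ.symm Tel = x ⊗ₜ 1 := by
    rw [AlgEquiv.symm_apply_eq]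
    exact hσl.symm
  -- base-case equivalence, made opaque
  obtain ⟨eB, hB⟩ : ∃ e : (A' ⊗[k] A') ≃ₗ[k] (ι → A'),
      ∀ v : A' ⊗[k] A', e (opT k A' x A' A' v) = x • e v := by
    refine ⟨σ.symm.toLinearEquiv ≪≫ₗ (bB.equivFun.restrictScalars k), fun v => ?_⟩
    have hTAA : opT k A' x A' A' v = Tel * v := by
      induction v using TensorProduct.induction_on with
      | zero => simp
      | tmul a b =>
          rw [hTelDef, opT]
          simp only [LinearMap.add_apply, TensorProduct.map_tmul,
            LinearMap.coe_restrictScalars, LinearMap.lsmul_apply, LinearMap.id_coe, id_eq,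
            smul_eq_mul, add_mul, Algebra.TensorProduct.tmul_mul_tmul, one_mul, mul_one]
      | add u w hu hw => rw [map_add, hu, hw, mul_add]
    rw [hTAA]
    show bB.equivFun (σ.symm (Tel * v)) = x • bB.equivFun (σ.symm v)
    rw [map_mul, hσsymm, ← LinearEquiv.map_smul]
    congr 1
    rw [Algebra.smul_def, Algebra.TensorProduct.algebraMap_apply]
    congr 1
  -- free module isomorphisms, made opaque
  haveI := hM
  haveI := hN
  haveI : Module.Finite A' M := Module.Finite.of_restrictScalars_finite k A' M
  haveI : Module.Finite A' N := Module.Finite.of_restrictScalars_finite k A' N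
  obtain ⟨eM⟩ : Nonempty (M ≃ₗ[A'] (Module.Free.ChooseBasisIndex A' M → A')) :=
    ⟨(Module.Free.chooseBasis A' M).equivFun⟩
  obtain ⟨eN⟩ : Nonempty (N ≃ₗ[A'] (Module.Free.ChooseBasisIndex A' N → A')) :=
    ⟨(Module.Free.chooseBasis A' N).equivFun⟩
  set ιM := Module.Free.ChooseBasisIndex A' M with hιM
  set ιN := Module.Free.ChooseBasisIndex A' N with hιN
  haveI : DecidableEq ιM := Classical.decEq _
  haveI : DecidableEq ιN := Classical.decEq _
  -- the chain of equivalences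
  refine ⟨Fintype.card ((_ : ιN) × (_ : ιM) × ι),
    TensorProduct.congr (eM.restrictScalars k) (eN.restrictScalars k)
      ≪≫ₗ TensorProduct.piRight k k (ιM → A') (fun _ : ιN => A')
      ≪≫ₗ LinearEquiv.piCongrRight (fun _ : ιN =>
            (TensorProduct.comm k (ιM → A') A')
              ≪≫ₗ TensorProduct.piRight k k A' (fun _ : ιM => A'))
      ≪≫ₗ LinearEquiv.piCongrRight (fun _ : ιN =>
            LinearEquiv.piCongrRight (fun _ : ιM => eB))
      ≪≫ₗ ((LinearEquiv.piCongrRight (fun _ : ιN =>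
              (LinearEquiv.piCurry A' (fun (_ : ιM) (_ : ι) => A')).symm)
            ≪≫ₗ (LinearEquiv.piCurry A' (fun (_ : ιN) (_ : (_ : ιM) × ι) => A')).symm
            ≪≫ₗ LinearEquiv.funCongrLeft A' A'
                (Fintype.equivFin ((_ : ιN) × (_ : ιM) × ι)).symm).restrictScalars k),
    fun z => ?_⟩
  have h1 : (TensorProduct.congr (eM.restrictScalars k) (eN.restrictScalars k))
        (opT k A' x M N z)
      = opT k A' x (ιM → A') (ιN → A')
        ((TensorProduct.congr (eM.restrictScalars k) (eN.restrictScalars k)) z) := by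
    induction z using TensorProduct.induction_on with
    | zero => simp
    | tmul m n =>
        simp only [opT, LinearMap.add_apply, TensorProduct.map_tmul,
          LinearMap.coe_restrictScalars, LinearMap.lsmul_apply, LinearMap.id_coe, id_eq,
          map_add, TensorProduct.congr_tmul, LinearEquiv.restrictScalars_apply,
          LinearEquiv.map_smul]
    | add u w hu hw => simp only [map_add, hu, hw]
  have h2 : ∀ w : (ιM → A') ⊗[k] (ιN → A'),
      (TensorProduct.piRight k k (ιM → A') (fun _ : ιN => A'))
        (opT k A' x (ιM → A') (ιN → A') w)
      = fun j => opT k A' x (ιM → A') A'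
          ((TensorProduct.piRight k k (ιM → A') (fun _ : ιN => A')) w j) := by
    intro w
    induction w using TensorProduct.induction_on with
    | zero => simp only [map_zero]; rfl
    | tmul v gg =>
        funext j
        simp only [opT, LinearMap.add_apply, TensorProduct.map_tmul,
          LinearMap.coe_restrictScalars, LinearMap.lsmul_apply, LinearMap.id_coe, id_eq,
          map_add, TensorProduct.piRight_apply, TensorProduct.piRightHom_tmul,
          Pi.add_apply, Pi.smul_apply]
    | add u w hu hw =>
        simp only [map_add, hu, hw]
        funext j
        simp only [map_add, Pi.add_apply]
  have h3 : ∀ u : (ιM → A') ⊗[k] A',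
      ((TensorProduct.comm k (ιM → A') A')
          ≪≫ₗ TensorProduct.piRight k k A' (fun _ : ιM => A'))
        (opT k A' x (ιM → A') A' u)
      = fun i => opT k A' x A' A'
          (((TensorProduct.comm k (ιM → A') A')
            ≪≫ₗ TensorProduct.piRight k k A' (fun _ : ιM => A')) u i) := by
    intro u
    induction u using TensorProduct.induction_on with
    | zero => simp only [map_zero]; rfl
    | tmul v a =>
        funext i
        simp only [opT, LinearMap.add_apply, TensorProduct.map_tmul,
          LinearMap.coe_restrictScalars, LinearMap.lsmul_apply, LinearMap.id_coe, id_eq,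
          map_add, LinearEquiv.trans_apply, TensorProduct.comm_tmul,
          TensorProduct.piRight_apply, TensorProduct.piRightHom_tmul,
          Pi.add_apply, Pi.smul_apply]
        rw [add_comm]
    | add u w hu hw =>
        simp only [map_add, hu, hw]
        funext i
        simp only [map_add, Pi.add_apply]
  simp only [LinearEquiv.trans_apply, LinearEquiv.restrictScalars_apply]
  rw [h1, h2]
  rw [show (LinearEquiv.piCongrRight (fun _ : ιN =>
        (TensorProduct.comm k (ιM → A') A')
          ≪≫ₗ TensorProduct.piRight k k A' (fun _ : ιM => A')))
      (fun j => opT k A' x (ιM → A') A'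
        ((TensorProduct.piRight k k (ιM → A') (fun _ : ιN => A'))
          ((TensorProduct.congr (eM.restrictScalars k) (eN.restrictScalars k)) z) j))
    = fun j i => opT k A' x A' A'
        ((LinearEquiv.piCongrRight (fun _ : ιN =>
            (TensorProduct.comm k (ιM → A') A')
              ≪≫ₗ TensorProduct.piRight k k A' (fun _ : ιM => A')))
          ((TensorProduct.piRight k k (ιM → A') (fun _ : ιN => A'))
            ((TensorProduct.congr (eM.restrictScalars k) (eN.restrictScalars k)) z)) j i)
    from funext fun j => h3 _]
  rw [show (LinearEquiv.piCongrRight (fun _ : ιN =>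
        LinearEquiv.piCongrRight (fun _ : ιM => eB)))
      (fun j i => opT k A' x A' A'
        ((LinearEquiv.piCongrRight (fun _ : ιN =>
            (TensorProduct.comm k (ιM → A') A')
              ≪≫ₗ TensorProduct.piRight k k A' (fun _ : ιM => A')))
          ((TensorProduct.piRight k k (ιM → A') (fun _ : ιN => A'))
            ((TensorProduct.congr (eM.restrictScalars k) (eN.restrictScalars k)) z)) j i))
    = x • (LinearEquiv.piCongrRight (fun _ : ιN =>
        LinearEquiv.piCongrRight (fun _ : ιM => eB)))
        ((LinearEquiv.piCongrRight (fun _ : ιN =>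
            (TensorProduct.comm k (ιM → A') A')
              ≪≫ₗ TensorProduct.piRight k k A' (fun _ : ιM => A')))
          ((TensorProduct.piRight k k (ιM → A') (fun _ : ιN => A'))
            ((TensorProduct.congr (eM.restrictScalars k) (eN.restrictScalars k)) z)))
    from funext fun j => funext fun i => hB _]
  simp only [map_smul]

end Generic

/-- The truncated polynomial algebra `A = k[x]/(x^p)`. -/
abbrev TruncPoly (k : Type*) [Field k] (p : ℕ) : Type _ :=
  k[X] ⧸ Ideal.span {(X : k[X]) ^ p}

/-- The `k`-linear operator on an `A`-module `M` given by multiplication by the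
image of `x`. -/
noncomputable def xOp (k : Type*) [Field k] (p : ℕ)
    (M : Type*) [AddCommGroup M] [Module (TruncPoly k p) M]
    [Module k M] [IsScalarTower k (TruncPoly k p) M] : M →ₗ[k] M :=
  LinearMap.restrictScalars k
    (LinearMap.lsmul (TruncPoly k p) M (Ideal.Quotient.mk _ (X : k[X])))

section Concrete

set_option linter.unusedSectionVars false

variable (k : Type*) [Field k] (p : ℕ) [Fact p.Prime] [CharP k p]

noncomputable def xA : TruncPoly k p := Ideal.Quotient.mk _ (X : k[X])

lemma xA_pow : xA k p ^ p = 0 := by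
  rw [xA, ← map_pow, Ideal.Quotient.eq_zero_iff_mem]
  exact Ideal.subset_span rfl

instance : Nontrivial (TruncPoly k p) := by
  refine Ideal.Quotient.nontrivial_iff.mpr ?_
  rw [Ne, Ideal.span_singleton_eq_top]
  intro h
  exact Polynomial.not_isUnit_X ((isUnit_pow_iff (Fact.out : p.Prime).ne_zero).mp h)

/-- lift a `p`-nilpotent element to an algebra hom from `TruncPoly k p`. -/
noncomputable def liftA {S : Type*} [CommRing S] [Algebra k S] (t : S) (ht : t ^ p = 0) :
    TruncPoly k p →ₐ[k] S :=
  Ideal.Quotient.liftₐ _ (aeval t) (by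
    intro a ha
    rw [Ideal.mem_span_singleton] at ha
    obtain ⟨c, rfl⟩ := ha
    rw [map_mul, map_pow, aeval_X, ht, zero_mul])

lemma liftA_xA {S : Type*} [CommRing S] [Algebra k S] (t : S) (ht : t ^ p = 0) :
    liftA k p t ht (xA k p) = t := by
  simp [liftA, xA]
  exact (Ideal.Quotient.lift_mk _ _ _).trans (aeval_X t)

lemma algHom_ext_trunc {S : Type*} [Semiring S] [Algebra k S]
    {f g : TruncPoly k p →ₐ[k] S} (h : f (xA k p) = g (xA k p)) : f = g := by
  have h2 : f.comp (Ideal.Quotient.mkₐ k _) = g.comp (Ideal.Quotient.mkₐ k _) :=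
    Polynomial.algHom_ext h
  ext x
  obtain ⟨y, rfl⟩ := Ideal.Quotient.mk_surjective x
  exact DFunLike.congr_fun h2 y

noncomputable def bA : Module.Basis (Fin (((X : k[X]) ^ p).natDegree)) k (TruncPoly k p) :=
  AdjoinRoot.powerBasisAux' (Polynomial.monic_X_pow p)

end Concrete

/-- If `M` and `N` are finite-dimensional free modules over
`A = k[x]/(x^p)`, then `M ⊗_k N`, with `x` acting via the coproduct
`x ↦ x ⊗ 1 + 1 ⊗ x`, is a free `A`-module: there is a `k`-linear isomorphism
`M ⊗ N ≅ A^n` carrying the operator `x⊗1 + 1⊗x` to multiplication by `x`. -/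
theorem stmt17 (k : Type*) [Field k] (p : ℕ) [Fact p.Prime] [CharP k p]
    (M : Type*) [AddCommGroup M] [Module (TruncPoly k p) M]
    [Module k M] [IsScalarTower k (TruncPoly k p) M] [FiniteDimensional k M]
    (N : Type*) [AddCommGroup N] [Module (TruncPoly k p) N]
    [Module k N] [IsScalarTower k (TruncPoly k p) N] [FiniteDimensional k N]
    (hM : Module.Free (TruncPoly k p) M) (hN : Module.Free (TruncPoly k p) N) :
    ∃ (n : ℕ) (e : M ⊗[k] N ≃ₗ[k] (Fin n → TruncPoly k p)),
      ∀ z : M ⊗[k] N,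
        e ((TensorProduct.map (xOp k p M) (LinearMap.id : N →ₗ[k] N)
              + TensorProduct.map (LinearMap.id : M →ₗ[k] M) (xOp k p N)) z) =
          (Ideal.Quotient.mk (Ideal.span {(X : k[X]) ^ p}) X) • e z := by
  exact gen_stmt (p := p) (xA k p) (xA_pow k p)
    (fun t ht => ⟨liftA k p t ht, liftA_xA k p t ht⟩)
    (fun f g h => algHom_ext_trunc k p h) (bA k p) M N hM hN
end
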